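/- arXiv:2604.26728 — 3 statements merged into one kernel-verified Lean document; each statement's English description precedes it below -/
import Mathlib

section
/- For all x, y in the open unit ball of ℝⁿ and all t with 0 ≤ t ≤ 1, one has [tx,y] ≥ [x,y]/2, where [x,y] := sqrt(1 - 2⟨x,y⟩ + |x|²|y|²). -/
open RealInnerProductSpace

/-- The bracket `[x,y] = sqrt(1 - 2⟨x,y⟩ + |x|²|y|²)`. -/
noncomputable def br {n : ℕ} (x y : EuclideanSpace ℝ (Fin n)) : ℝ :=
  Real.sqrt (1 - 2 * ⟪x, y⟫ + ‖x‖ ^ 2 * ‖y‖ ^ 2)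

theorem stmt_0 {n : ℕ} (hn : 2 ≤ n) (x y : EuclideanSpace ℝ (Fin n))
    (hx : ‖x‖ < 1) (hy : ‖y‖ < 1) (t : ℝ) (ht0 : 0 ≤ t) (ht1 : t ≤ 1) :
    br x y / 2 ≤ br (t • x) y := by
  set s : ℝ := ⟪x, y⟫ with hs
  have hcs : |s| ≤ ‖x‖ * ‖y‖ := abs_real_inner_le_norm x y
  have hs1 : s ≤ ‖x‖ * ‖y‖ := (abs_le.mp hcs).2
  have hs2 : -(‖x‖ * ‖y‖) ≤ s := (abs_le.mp hcs).1
  have hxn : 0 ≤ ‖x‖ := norm_nonneg x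
  have hyn : 0 ≤ ‖y‖ := norm_nonneg y
  have hu1 : ‖x‖ * ‖y‖ < 1 := by nlinarith
  have key : (1 - 2 * s + ‖x‖ ^ 2 * ‖y‖ ^ 2) / 4 ≤
      1 - 2 * (t * s) + (t * ‖x‖) ^ 2 * ‖y‖ ^ 2 := by
    rcases le_total t (1/4) with h | h
    · nlinarith [mul_nonneg (mul_nonneg ht0 hxn) hyn, sq_nonneg (t * ‖x‖ * ‖y‖),
        mul_nonneg (mul_nonneg ht0 ht0) (sq_nonneg (‖x‖ * ‖y‖))]
    · nlinarith [sq_nonneg (1 - ‖x‖ * ‖y‖), sq_nonneg (t * ‖x‖ * ‖y‖ - 1),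
        mul_nonneg (mul_nonneg ht0 hxn) hyn,
        mul_le_one₀ hu1.le (by positivity : (0:ℝ) ≤ t * ‖x‖ * ‖y‖) (le_of_lt (by nlinarith))]
  have hbr : br (t • x) y = Real.sqrt (1 - 2 * (t * s) + (t * ‖x‖) ^ 2 * ‖y‖ ^ 2) := by
    rw [br, real_inner_smul_left, norm_smul, Real.norm_eq_abs, abs_of_nonneg ht0]
  have hnn : 0 ≤ 1 - 2 * s + ‖x‖ ^ 2 * ‖y‖ ^ 2 := by nlinarith
  have h4 : Real.sqrt ((1 - 2 * s + ‖x‖ ^ 2 * ‖y‖ ^ 2) / 4) =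
      Real.sqrt (1 - 2 * s + ‖x‖ ^ 2 * ‖y‖ ^ 2) / 2 := by
    rw [show (1 - 2 * s + ‖x‖ ^ 2 * ‖y‖ ^ 2) / 4 =
        (1 - 2 * s + ‖x‖ ^ 2 * ‖y‖ ^ 2) * (1/2)^2 by ring,
      Real.sqrt_mul hnn, Real.sqrt_sq (by norm_num)]
    ring
  rw [hbr, br, ← hs, ← h4]
  exact Real.sqrt_le_sqrt key
end

section
/- Hardy's inequality: let 1 ≤ p < ∞, α > -1 and a < 1. For every nonnegative measurable function g on (a,1), ∫_a^1 (∫_a^x g(t) dt)^p (1-x)^α dx ≤ (p/(α+1))^p ∫_a^1 g(x)^p (1-x)^{α+p} dx. -/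
open MeasureTheory Set

private lemma hardy_meas_w (c : ℝ) : Measurable fun x : ℝ => ENNReal.ofReal ((1-x)^c) :=
  ENNReal.measurable_ofReal.comp ((measurable_const.sub measurable_id).pow_const c)

private lemma hardy_beta_int {c t : ℝ} (hc : -1 < c) (ht : t < 1) :
    ∫⁻ x in Ioo t 1, ENNReal.ofReal ((1-x)^c) = ENNReal.ofReal ((1-t)^(c+1) / (c+1)) := by
  have hii : IntervalIntegrable (fun x : ℝ => (1-x)^c) volume t 1 := by
    have h0 : IntervalIntegrable (fun x : ℝ => x ^ c) volume (1-1) (1-t) := by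
      simpa using intervalIntegral.intervalIntegrable_rpow' (a := (1:ℝ)-1) (b := 1-t) hc
    have := h0.comp_sub_left 1
    norm_num at this
    exact this.symm
  have hint : ∫ x in t..1, (1-x)^c = (1-t)^(c+1)/(c+1) := by
    rw [show (fun x : ℝ => (1-x)^c) = (fun x : ℝ => ((fun y : ℝ => y ^ c) (1 - x))) from rfl]
    rw [intervalIntegral.integral_comp_sub_left (fun y : ℝ => y ^ c) 1]
    rw [integral_rpow (Or.inl hc)]
    norm_num
    rw [Real.zero_rpow (by linarith)]
    ring
  have hio : IntegrableOn (fun x : ℝ => (1-x)^c) (Ioo t 1) volume :=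
    (intervalIntegrable_iff_integrableOn_Ioo_of_le ht.le).mp hii
  have hnn : 0 ≤ᵐ[volume.restrict (Ioo t 1)] fun x : ℝ => (1-x)^c := by
    filter_upwards [ae_restrict_mem measurableSet_Ioo] with x hx
    exact Real.rpow_nonneg (by linarith [hx.2]) c
  rw [← MeasureTheory.ofReal_integral_eq_lintegral_ofReal hio hnn]
  congr 1
  rw [← hint, intervalIntegral.integral_of_le ht.le, integral_Ioc_eq_integral_Ioo]

private lemma hardy_beta_int2 {c x a : ℝ} (hc : 1 < c) (hax : a < x) (hx1 : x < 1) :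
    ∫⁻ t in Ioo a x, ENNReal.ofReal ((1-t)^(-c)) ≤ ENNReal.ofReal ((1-x)^(1-c)/(c-1)) := by
  have h1x : 0 < 1 - x := by linarith
  have h1a : 0 < 1 - a := by linarith
  have hii : IntervalIntegrable (fun t : ℝ => (1-t)^(-c)) volume a x := by
    apply ContinuousOn.intervalIntegrable
    apply ContinuousOn.rpow_const ((continuous_const.sub continuous_id).continuousOn)
    intro t ht
    rw [uIcc_of_le hax.le] at ht
    exact Or.inl (by have h2 := ht.2; simp only [Pi.sub_apply, id_eq]; intro h; nlinarith)
  have hint : ∫ t in a..x, (1-t)^(-c) = ((1-x)^(1-c) - (1-a)^(1-c))/(c-1) := by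
    rw [show (fun t : ℝ => (1-t)^(-c)) = (fun t : ℝ => ((fun y : ℝ => y ^ (-c)) (1 - t))) from rfl]
    rw [intervalIntegral.integral_comp_sub_left (fun y : ℝ => y ^ (-c)) 1]
    rw [integral_rpow (Or.inr ⟨ne_of_lt (by linarith), notMem_uIcc_of_lt h1x h1a⟩)]
    rw [show -c + 1 = 1 - c by ring, div_eq_div_iff (by linarith) (by linarith)]
    ring
  have hio : IntegrableOn (fun t : ℝ => (1-t)^(-c)) (Ioo a x) volume :=
    (intervalIntegrable_iff_integrableOn_Ioo_of_le hax.le).mp hii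
  have hnn : 0 ≤ᵐ[volume.restrict (Ioo a x)] fun t : ℝ => (1-t)^(-c) := by
    filter_upwards [ae_restrict_mem measurableSet_Ioo] with t ht
    exact Real.rpow_nonneg (by linarith [ht.2]) _
  rw [← MeasureTheory.ofReal_integral_eq_lintegral_ofReal hio hnn]
  apply ENNReal.ofReal_le_ofReal
  rw [show ∫ t in Ioo a x, (1-t)^(-c) = ((1-x)^(1-c) - (1-a)^(1-c))/(c-1) by
    rw [← integral_Ioc_eq_integral_Ioo, ← intervalIntegral.integral_of_le hax.le, hint]]
  gcongr
  exact sub_le_self _ (Real.rpow_nonneg h1a.le _)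

private lemma hardy_fubini_tri (a : ℝ) (F W : ℝ → ENNReal) (hF : Measurable F) (hW : Measurable W) :
    ∫⁻ x in Ioo a 1, (∫⁻ t in Ioo a x, F t) * W x
      = ∫⁻ t in Ioo a 1, F t * ∫⁻ x in Ioo t 1, W x := by
  set H : ℝ × ℝ → ENNReal := fun q => {q : ℝ × ℝ | q.2 < q.1}.indicator (fun q => F q.2 * W q.1) q with hH
  have hHm : Measurable H :=
    Measurable.indicator ((hF.comp measurable_snd).mul (hW.comp measurable_fst))
      (measurableSet_lt measurable_snd measurable_fst)
  have key1 : ∀ x ∈ Ioo a 1, ∫⁻ t in Ioo a 1, H (x, t) = (∫⁻ t in Ioo a x, F t) * W x := by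
    intro x hx
    have h1 : ∀ t : ℝ, H (x, t) = (Iio x).indicator (fun t => F t * W x) t := by
      intro t
      by_cases h : t < x <;> simp [hH, Set.indicator, h]
    simp_rw [h1]
    rw [lintegral_indicator measurableSet_Iio, Measure.restrict_restrict measurableSet_Iio,
      show Iio x ∩ Ioo a 1 = Ioo a x by
        ext y
        simp only [mem_inter_iff, mem_Iio, mem_Ioo]
        exact ⟨fun ⟨h1, h2, h3⟩ => ⟨h2, h1⟩, fun ⟨h1, h2⟩ => ⟨h2, h1, h2.trans hx.2⟩⟩]
    exact lintegral_mul_const _ hF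
  have key2 : ∀ t ∈ Ioo a 1, ∫⁻ x in Ioo a 1, H (x, t) = F t * ∫⁻ x in Ioo t 1, W x := by
    intro t ht
    have h1 : ∀ x : ℝ, H (x, t) = (Ioi t).indicator (fun x => F t * W x) x := by
      intro x
      by_cases h : t < x <;> simp [hH, Set.indicator, h]
    simp_rw [h1]
    rw [lintegral_indicator measurableSet_Ioi, Measure.restrict_restrict measurableSet_Ioi,
      show Ioi t ∩ Ioo a 1 = Ioo t 1 by
        ext y
        simp only [mem_inter_iff, mem_Ioi, mem_Ioo]
        exact ⟨fun ⟨h1, h2, h3⟩ => ⟨h1, h3⟩, fun ⟨h1, h2⟩ => ⟨h1, ht.1.trans h1, h2⟩⟩]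
    exact lintegral_const_mul _ hW
  calc ∫⁻ x in Ioo a 1, (∫⁻ t in Ioo a x, F t) * W x
      = ∫⁻ x in Ioo a 1, ∫⁻ t in Ioo a 1, H (x, t) :=
        (setLIntegral_congr_fun measurableSet_Ioo (fun x hx => (key1 x hx).symm))
    _ = ∫⁻ t in Ioo a 1, ∫⁻ x in Ioo a 1, H (x, t) :=
        lintegral_lintegral_swap hHm.aemeasurable
    _ = ∫⁻ t in Ioo a 1, F t * ∫⁻ x in Ioo t 1, W x :=
        setLIntegral_congr_fun measurableSet_Ioo (fun t ht => key2 t ht)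

/-- Hardy's inequality on `(a,1)` with weight `(1-x)^α`. -/
theorem stmt_3 (p α a : ℝ) (hp : 1 ≤ p) (hα : -1 < α) (ha : a < 1)
    (g : ℝ → ℝ) (hg : Measurable g) (hg0 : ∀ x ∈ Set.Ioo a 1, 0 ≤ g x) :
    ∫⁻ x in Set.Ioo a 1,
        (∫⁻ t in Set.Ioo a x, ENNReal.ofReal (g t)) ^ p
          * ENNReal.ofReal ((1 - x) ^ α)
      ≤ ENNReal.ofReal ((p / (α + 1)) ^ p)
        * ∫⁻ x in Set.Ioo a 1,
            ENNReal.ofReal (g x) ^ p * ENNReal.ofReal ((1 - x) ^ (α + p)) := by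
  have hα1 : (0:ℝ) < α + 1 := by linarith
  rcases eq_or_lt_of_le hp with hp1 | hp1
  · -- p = 1
    subst hp1
    simp only [ENNReal.rpow_one]
    rw [hardy_fubini_tri a (fun t => ENNReal.ofReal (g t)) (fun x => ENNReal.ofReal ((1-x)^α))
      (ENNReal.measurable_ofReal.comp hg) (hardy_meas_w α)]
    rw [setLIntegral_congr_fun measurableSet_Ioo (
      (fun t (ht : t ∈ Ioo a 1) => show ENNReal.ofReal (g t) * ∫⁻ x in Ioo t 1, ENNReal.ofReal ((1-x)^α)
        = ENNReal.ofReal (1/(α+1)) * (ENNReal.ofReal (g t) * ENNReal.ofReal ((1-t)^(α+1))) by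
        rw [hardy_beta_int hα ht.2, show (1-t)^(α+1)/(α+1) = (1/(α+1)) * (1-t)^(α+1) by ring,
          ENNReal.ofReal_mul (by positivity)]
        ring))]
    rw [lintegral_const_mul' _ _ ENNReal.ofReal_ne_top, Real.rpow_one]
  · -- 1 < p
    have hp0 : (0:ℝ) < p := by linarith
    have hpm1 : (0:ℝ) < p - 1 := by linarith
    have hpne : p ≠ 0 := ne_of_gt hp0
    have hpm1ne : p - 1 ≠ 0 := ne_of_gt hpm1
    obtain ⟨q, hqdef⟩ : ∃ q : ℝ, q = p/(p-1) := ⟨_, rfl⟩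
    have hpq : p.HolderConjugate q := hqdef ▸ Real.HolderConjugate.conjExponent hp1
    have hq0 : (0:ℝ) < q := hqdef ▸ div_pos hp0 hpm1
    have hqne : q ≠ 0 := ne_of_gt hq0
    obtain ⟨s, hsdef⟩ : ∃ s : ℝ, s = (α+1+p)*(p-1)/p^2 := ⟨_, rfl⟩
    have hsq : s * q = (α+1+p)/p := by
      rw [hsdef, hqdef]; field_simp
    have hsq1 : 1 < s * q := by rw [hsq, lt_div_iff₀ hp0]; linarith
    have hpdq : p / q = p - 1 := by rw [hqdef]; field_simp
    have hpq0 : (0:ℝ) < p / q := by rw [hpdq]; linarith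
    obtain ⟨γ, hγdef⟩ : ∃ γ : ℝ, γ = (1 - s*q)*(p/q) + α := ⟨_, rfl⟩
    have hγ1 : γ + 1 = (α+1)/p := by
      rw [hγdef, hsq, hpdq]; field_simp; ring
    have hγ10 : (0:ℝ) < γ + 1 := hγ1 ▸ div_pos hα1 hp0
    have hγ : -1 < γ := by linarith
    have hsum : s*p + (γ+1) = α + p := by
      rw [hγ1, hsdef]; field_simp; ring
    obtain ⟨K, hKdef⟩ : ∃ K : ℝ, K = ((s*q-1)^(p/q))⁻¹ := ⟨_, rfl⟩
    have hK0 : 0 ≤ K := by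
      rw [hKdef]
      exact inv_nonneg.mpr (Real.rpow_nonneg (by linarith) _)
    obtain ⟨F, hFdef⟩ : ∃ F : ℝ → ENNReal,
        F = fun t => ENNReal.ofReal (g t) ^ p * ENNReal.ofReal ((1-t)^(s*p)) := ⟨_, rfl⟩
    have hFm : Measurable F := by
      rw [hFdef]
      exact ((ENNReal.measurable_ofReal.comp hg).pow_const p).mul (hardy_meas_w (s*p))
    have key : ∀ x ∈ Ioo a 1, (∫⁻ t in Ioo a x, ENNReal.ofReal (g t)) ^ p * ENNReal.ofReal ((1-x)^α)
        ≤ ENNReal.ofReal K * ((∫⁻ t in Ioo a x, F t) * ENNReal.ofReal ((1-x)^γ)) := by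
      intro x hx
      obtain ⟨hax, hx1⟩ := hx
      have h1x : 0 < 1 - x := by linarith
      have hG : ∫⁻ t in Ioo a x, ENNReal.ofReal (g t)
          = ∫⁻ t in Ioo a x, ((fun t => ENNReal.ofReal (g t) * ENNReal.ofReal ((1-t)^s)) *
              (fun t => ENNReal.ofReal ((1-t)^(-s)))) t := by
        refine (setLIntegral_congr_fun measurableSet_Ioo (fun t ht => ?_))
        have h1t : 0 < 1 - t := by linarith [ht.2]
        simp only [Pi.mul_apply]
        rw [mul_assoc, ← ENNReal.ofReal_mul (Real.rpow_nonneg h1t.le s), ← Real.rpow_add h1t]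
        norm_num
      have hmul1 : AEMeasurable (fun t => ENNReal.ofReal (g t) * ENNReal.ofReal ((1-t)^s))
          (volume.restrict (Ioo a x)) :=
        ((ENNReal.measurable_ofReal.comp hg).mul (hardy_meas_w s)).aemeasurable
      have hmul2 : AEMeasurable (fun t : ℝ => ENNReal.ofReal ((1-t)^(-s)))
          (volume.restrict (Ioo a x)) := (hardy_meas_w (-s)).aemeasurable
      have holder := ENNReal.lintegral_mul_le_Lp_mul_Lq (volume.restrict (Ioo a x)) hpq hmul1 hmul2
      rw [← hG] at holder
      have hA : (∫⁻ t in Ioo a x, (ENNReal.ofReal (g t) * ENNReal.ofReal ((1-t)^s)) ^ p)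
          = ∫⁻ t in Ioo a x, F t := by
        refine setLIntegral_congr_fun measurableSet_Ioo (fun t ht => ?_)
        have h1t : 0 < 1 - t := by linarith [ht.2]
        rw [hFdef, ENNReal.mul_rpow_of_nonneg _ _ hp0.le,
          ENNReal.ofReal_rpow_of_nonneg (Real.rpow_nonneg h1t.le s) hp0.le,
          ← Real.rpow_mul h1t.le]
      have hB : (∫⁻ t in Ioo a x, (ENNReal.ofReal ((1-t)^(-s))) ^ q)
          = ∫⁻ t in Ioo a x, ENNReal.ofReal ((1-t)^(-(s*q))) := by
        refine setLIntegral_congr_fun measurableSet_Ioo (fun t ht => ?_)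
        have h1t : 0 < 1 - t := by linarith [ht.2]
        rw [ENNReal.ofReal_rpow_of_nonneg (Real.rpow_nonneg h1t.le _) hq0.le,
          ← Real.rpow_mul h1t.le, neg_mul]
      rw [hA, hB] at holder
      have hBle : (∫⁻ t in Ioo a x, ENNReal.ofReal ((1-t)^(-(s*q))))
          ≤ ENNReal.ofReal ((1-x)^(1-s*q)/(s*q-1)) := hardy_beta_int2 hsq1 hax hx1
      have step : (∫⁻ t in Ioo a x, ENNReal.ofReal (g t)) ^ p
          ≤ (∫⁻ t in Ioo a x, F t) * (ENNReal.ofReal ((1-x)^(1-s*q)/(s*q-1))) ^ (p/q) := by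
        calc (∫⁻ t in Ioo a x, ENNReal.ofReal (g t)) ^ p
            ≤ ((∫⁻ t in Ioo a x, F t) ^ (1/p)
                * (ENNReal.ofReal ((1-x)^(1-s*q)/(s*q-1))) ^ (1/q)) ^ p := by
              apply ENNReal.rpow_le_rpow _ hp0.le
              exact holder.trans (mul_le_mul' (le_refl _)
                (ENNReal.rpow_le_rpow hBle (one_div_nonneg.mpr hq0.le)))
          _ = _ := by
              rw [ENNReal.mul_rpow_of_nonneg _ _ hp0.le, ← ENNReal.rpow_mul, ← ENNReal.rpow_mul,
                show (1/p)*p = 1 by field_simp, ENNReal.rpow_one,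
                show (1/q)*p = p/q by ring]
      calc (∫⁻ t in Ioo a x, ENNReal.ofReal (g t)) ^ p * ENNReal.ofReal ((1-x)^α)
          ≤ ((∫⁻ t in Ioo a x, F t) * (ENNReal.ofReal ((1-x)^(1-s*q)/(s*q-1))) ^ (p/q))
              * ENNReal.ofReal ((1-x)^α) := mul_le_mul_left step _
        _ = ENNReal.ofReal K * ((∫⁻ t in Ioo a x, F t) * ENNReal.ofReal ((1-x)^γ)) := by
            rw [ENNReal.ofReal_rpow_of_nonneg
              (div_nonneg (Real.rpow_nonneg h1x.le _) (by linarith)) hpq0.le]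
            rw [show ((1-x)^(1-s*q)/(s*q-1))^(p/q) = (1-x)^((1-s*q)*(p/q)) * K by
              rw [Real.div_rpow (Real.rpow_nonneg h1x.le _) (by linarith),
                ← Real.rpow_mul h1x.le, hKdef, div_eq_mul_inv]]
            rw [ENNReal.ofReal_mul (Real.rpow_nonneg h1x.le _)]
            rw [show ENNReal.ofReal ((1-x)^γ)
                = ENNReal.ofReal ((1-x)^((1-s*q)*(p/q))) * ENNReal.ofReal ((1-x)^α) by
              rw [← ENNReal.ofReal_mul (Real.rpow_nonneg h1x.le _), ← Real.rpow_add h1x, hγdef]]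
            ring
    calc ∫⁻ x in Ioo a 1, (∫⁻ t in Ioo a x, ENNReal.ofReal (g t)) ^ p * ENNReal.ofReal ((1-x)^α)
        ≤ ∫⁻ x in Ioo a 1, ENNReal.ofReal K
            * ((∫⁻ t in Ioo a x, F t) * ENNReal.ofReal ((1-x)^γ)) := by
          refine lintegral_mono_ae ?_
          filter_upwards [ae_restrict_mem measurableSet_Ioo] with x hx
          exact key x hx
      _ = ENNReal.ofReal K
            * ∫⁻ x in Ioo a 1, (∫⁻ t in Ioo a x, F t) * ENNReal.ofReal ((1-x)^γ) :=
          lintegral_const_mul' _ _ ENNReal.ofReal_ne_top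
      _ = ENNReal.ofReal K * ∫⁻ t in Ioo a 1, F t * ∫⁻ x in Ioo t 1, ENNReal.ofReal ((1-x)^γ) := by
          rw [hardy_fubini_tri a F _ hFm (hardy_meas_w γ)]
      _ = ENNReal.ofReal K * ∫⁻ t in Ioo a 1, ENNReal.ofReal (1/(γ+1))
            * (ENNReal.ofReal (g t) ^ p * ENNReal.ofReal ((1-t)^(α+p))) := by
          congr 1
          refine setLIntegral_congr_fun measurableSet_Ioo (fun t ht => ?_)
          have h1t : 0 < 1 - t := by linarith [ht.2]
          rw [hardy_beta_int hγ ht.2]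
          simp only [hFdef]
          rw [show (1-t)^(γ+1)/(γ+1) = (1/(γ+1)) * (1-t)^(γ+1) by ring]
          rw [ENNReal.ofReal_mul (le_of_lt (by rw [one_div]; exact inv_pos.mpr hγ10))]
          rw [show (α+p) = s*p + (γ+1) by linarith [hsum]]
          rw [Real.rpow_add h1t (s*p) (γ+1), ENNReal.ofReal_mul (Real.rpow_nonneg h1t.le _)]
          ring
      _ = (ENNReal.ofReal K * ENNReal.ofReal (1/(γ+1)))
            * ∫⁻ x in Ioo a 1, ENNReal.ofReal (g x) ^ p * ENNReal.ofReal ((1-x)^(α+p)) := by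
          rw [lintegral_const_mul' _ _ ENNReal.ofReal_ne_top, mul_assoc]
      _ = ENNReal.ofReal ((p/(α+1))^p)
            * ∫⁻ x in Ioo a 1, ENNReal.ofReal (g x) ^ p * ENNReal.ofReal ((1-x)^(α+p)) := by
          congr 1
          rw [← ENNReal.ofReal_mul hK0]
          congr 1
          rw [hKdef, hpdq, show s*q - 1 = (α+1)/p by rw [hsq]; field_simp; ring, hγ1,
            show (1:ℝ)/((α+1)/p) = p/(α+1) by rw [one_div_div],
            ← Real.inv_rpow (le_of_lt (div_pos hα1 hp0)), inv_div,
            ← Real.rpow_add_one (ne_of_gt (div_pos hp0 hα1)), sub_add_cancel]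
end

section
/- Let b > -1 and c ∈ ℝ. There exists a constant C = C(n,b,c) such that for all x, y in the open unit ball of ℝⁿ, ∫₀¹ (1-t)^b / [tx,y]^{1+b+c} dt is bounded by C/[x,y]^c if c > 0, by C(1 + log(1/[x,y])) if c = 0, and by C if c < 0. -/
set_option maxHeartbeats 1000000

open RealInnerProductSpace

namespace Stmt4Aux
open MeasureTheory Set


lemma br_eq {n : ℕ} (x y : EuclideanSpace ℝ (Fin n)) (t : ℝ) :
    br (t • x) y = Real.sqrt (1 - 2 * (t * ⟪x, y⟫) + t ^ 2 * ((‖x‖ * ‖y‖) ^ 2)) := by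
  rw [br, real_inner_smul_left, norm_smul, Real.norm_eq_abs]
  ring_nf
  rw [sq_abs]

lemma key1 (A s t : ℝ) (hA : |A| ≤ s) (hs : s ≤ 1) (ht0 : 0 ≤ t) (ht1 : t ≤ 1) :
    (1 - t) ^ 2 ≤ 1 - 2 * (t * A) + t ^ 2 * s ^ 2 := by
  rw [abs_le] at hA
  nlinarith [mul_nonneg ht0 (sub_nonneg.2 hs), sq_nonneg (1 - t*s), sq_nonneg (t*(1-s))]

lemma key2 (A s t : ℝ) (hA : |A| ≤ s) (hs : s ≤ 1) (ht0 : 0 ≤ t) (ht1 : t ≤ 1) :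
    1 - 2 * A + s ^ 2 ≤ 16 * (1 - 2 * (t * A) + t ^ 2 * s ^ 2) := by
  have hs0 : 0 ≤ s := (abs_nonneg A).trans hA
  rw [abs_le] at hA
  have hts : t * s ≤ s := by nlinarith
  rcases le_or_gt t (1/2) with h | h
  · nlinarith [sq_nonneg (1 - t*s), sq_nonneg s, mul_nonneg ht0 hs0]
  · nlinarith [sq_nonneg (1 - t*s), sq_nonneg (1 - s),
      mul_nonneg (mul_nonneg (mul_nonneg hs0 (sub_nonneg.2 ht1)) (by linarith : (0:ℝ) ≤ 2 - s - t*s)) (by linarith : (0:ℝ) ≤ 1),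
      mul_nonneg (by linarith : (0:ℝ) ≤ 2*t - 1) (sub_nonneg.2 hA.2)]

lemma hs1 {n : ℕ} (x y : EuclideanSpace ℝ (Fin n)) (hx : ‖x‖ ≤ 1) (hy : ‖y‖ ≤ 1) :
    ‖x‖ * ‖y‖ ≤ 1 := by nlinarith [norm_nonneg x, norm_nonneg y]

lemma br_pos {n : ℕ} (x y : EuclideanSpace ℝ (Fin n)) (hx : ‖x‖ < 1) (hy : ‖y‖ < 1) :
    0 < br x y := by
  have hA := abs_real_inner_le_norm x y
  have hs : ‖x‖ * ‖y‖ < 1 := by nlinarith [norm_nonneg x, norm_nonneg y]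
  rw [abs_le] at hA
  apply Real.sqrt_pos.2
  nlinarith [mul_pos (sub_pos.2 hs) (sub_pos.2 hs)]

lemma br_le_two {n : ℕ} (x y : EuclideanSpace ℝ (Fin n)) (hx : ‖x‖ ≤ 1) (hy : ‖y‖ ≤ 1) :
    br x y ≤ 2 := by
  have hA := abs_real_inner_le_norm x y
  have hs := hs1 x y hx hy
  rw [abs_le] at hA
  have h4 : 1 - 2 * ⟪x, y⟫ + ‖x‖ ^ 2 * ‖y‖ ^ 2 ≤ 4 := by nlinarith [norm_nonneg x, norm_nonneg y]
  calc br x y ≤ Real.sqrt 4 := Real.sqrt_le_sqrt h4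
  _ = 2 := by rw [show (4:ℝ) = 2^2 by norm_num, Real.sqrt_sq]; norm_num

lemma br_sq {n : ℕ} (x y : EuclideanSpace ℝ (Fin n)) (hx : ‖x‖ ≤ 1) (hy : ‖y‖ ≤ 1) :
    br x y ^ 2 = 1 - 2 * ⟪x, y⟫ + ‖x‖ ^ 2 * ‖y‖ ^ 2 := by
  have hA := abs_real_inner_le_norm x y
  have hs := hs1 x y hx hy
  rw [abs_le] at hA
  apply Real.sq_sqrt
  nlinarith [sq_nonneg (1 - ‖x‖*‖y‖)]

lemma br_lb1 {n : ℕ} (x y : EuclideanSpace ℝ (Fin n)) (hx : ‖x‖ ≤ 1) (hy : ‖y‖ ≤ 1)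
    {t : ℝ} (ht0 : 0 ≤ t) (ht1 : t ≤ 1) : 1 - t ≤ br (t • x) y := by
  rw [br_eq]
  have h := key1 ⟪x, y⟫ (‖x‖ * ‖y‖) t (abs_real_inner_le_norm x y) (hs1 x y hx hy) ht0 ht1
  calc 1 - t = Real.sqrt ((1 - t)^2) := (Real.sqrt_sq (by linarith)).symm
  _ ≤ _ := Real.sqrt_le_sqrt h

lemma br_lb2 {n : ℕ} (x y : EuclideanSpace ℝ (Fin n)) (hx : ‖x‖ ≤ 1) (hy : ‖y‖ ≤ 1)
    {t : ℝ} (ht0 : 0 ≤ t) (ht1 : t ≤ 1) : br x y / 4 ≤ br (t • x) y := by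
  rw [br_eq]
  have h := key2 ⟪x, y⟫ (‖x‖ * ‖y‖) t (abs_real_inner_le_norm x y) (hs1 x y hx hy) ht0 ht1
  have hsq := br_sq x y hx hy
  have hbr0 : 0 ≤ br x y := Real.sqrt_nonneg _
  calc br x y / 4 = Real.sqrt ((br x y / 4)^2) := (Real.sqrt_sq (by linarith)).symm
  _ ≤ _ := by
      apply Real.sqrt_le_sqrt
      have : (br x y / 4)^2 = (br x y ^ 2) / 16 := by ring
      rw [this, hsq]
      rw [mul_pow] at h
      linarith

lemma integral_mono_Ico {f g : ℝ → ℝ} {a b : ℝ} (hab : a ≤ b)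
    (hf : IntervalIntegrable f volume a b) (hg : IntervalIntegrable g volume a b)
    (h : ∀ t ∈ Set.Ico a b, f t ≤ g t) :
    (∫ t in a..b, f t) ≤ ∫ t in a..b, g t := by
  refine intervalIntegral.integral_mono_ae_restrict hab hf hg ?_
  have h1 : ∀ᵐ t ∂(volume.restrict (Set.Icc a b)), t ∈ Set.Icc a b :=
    ae_restrict_mem measurableSet_Icc
  have h2 : ∀ᵐ t ∂(volume.restrict (Set.Icc a b)), t ≠ b := by
    refine ae_restrict_of_ae ?_
    rw [ae_iff]
    simp only [not_not, Set.setOf_eq_eq_singleton]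
    exact Real.volume_singleton
  filter_upwards [h1, h2] with t ht hne
  exact h t ⟨ht.1, lt_of_le_of_ne ht.2 hne⟩

end Stmt4Aux

open MeasureTheory Set in

open Stmt4Aux in
theorem stmt_4 {n : ℕ} (hn : 2 ≤ n) (b c : ℝ) (hb : -1 < b) :
    ∃ C > 0, ∀ x y : EuclideanSpace ℝ (Fin n), ‖x‖ < 1 → ‖y‖ < 1 →
      ((0 < c → (∫ t in (0:ℝ)..1, (1 - t) ^ b / br (t • x) y ^ (1 + b + c))
          ≤ C / br x y ^ c) ∧
       (c = 0 → (∫ t in (0:ℝ)..1, (1 - t) ^ b / br (t • x) y ^ (1 + b + c))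
          ≤ C * (1 + Real.log (1 / br x y))) ∧
       (c < 0 → (∫ t in (0:ℝ)..1, (1 - t) ^ b / br (t • x) y ^ (1 + b + c))
          ≤ C)) := by
  have hb1 : (0:ℝ) < b + 1 := by linarith
  have hb1' : b + 1 ≠ 0 := ne_of_gt hb1
  have hlog2lt : Real.log 2 < 1 := by
    have := Real.log_two_lt_d9; linarith
  have hlog2pos : (0:ℝ) < Real.log 2 := Real.log_pos (by norm_num)
  set C0 : ℝ := (Real.log 4 + 1/(b+1) + 1) / (1 - Real.log 2) with hC0def
  have hlog4 : (0:ℝ) ≤ Real.log 4 := Real.log_nonneg (by norm_num)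
  have hinvb : (0:ℝ) < 1/(b+1) := by positivity
  have hC01 : 1 ≤ C0 := by
    rw [hC0def, le_div_iff₀ (by linarith)]
    linarith
  have hC0eq : C0 * (1 - Real.log 2) = Real.log 4 + 1/(b+1) + 1 := by
    rw [hC0def, div_mul_cancel₀ _ (by linarith : (1:ℝ) - Real.log 2 ≠ 0)]
  have habs1 : (0:ℝ) ≤ 2 ^ (1 + |b| + |c|) / (b+1) := by positivity
  have habs2 : (0:ℝ) ≤ 1/|c| := by positivity
  have habs3 : (0:ℝ) ≤ 4^|c| * (1/|c| + 1/(b+1)) := by positivity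
  refine ⟨1 + 2 ^ (1 + |b| + |c|) / (b+1) + 1/|c| + 4^|c| * (1/|c| + 1/(b+1)) + C0,
    by linarith, ?_⟩
  intro x y hx hy
  set r := br x y with hrdef
  have hr0 : 0 < r := br_pos x y hx hy
  have hr2 : r ≤ 2 := br_le_two x y hx.le hy.le
  have hr40 : 0 < r/4 := by linarith
  have hr41 : r/4 ≤ 1/2 := by linarith
  set q : ℝ := 1 + b + c with hqdef
  set B : ℝ → ℝ := fun t => br (t • x) y with hBdef
  have hBlb1 : ∀ t : ℝ, 0 ≤ t → t ≤ 1 → 1 - t ≤ B t := fun t h0 h1 =>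
    br_lb1 x y hx.le hy.le h0 h1
  have hBlb2 : ∀ t : ℝ, 0 ≤ t → t ≤ 1 → r/4 ≤ B t := fun t h0 h1 =>
    br_lb2 x y hx.le hy.le h0 h1
  have hBpos : ∀ t ∈ Set.Icc (0:ℝ) 1, 0 < B t := fun t ht =>
    lt_of_lt_of_le hr40 (hBlb2 t ht.1 ht.2)
  have hBcont : Continuous B := by
    have h1 : Continuous fun t : ℝ => 1 - 2*(t * ⟪x,y⟫) + t^2 * ((‖x‖*‖y‖)^2) := by
      continuity
    have : B = fun t : ℝ => Real.sqrt (1 - 2*(t * ⟪x,y⟫) + t^2 * ((‖x‖*‖y‖)^2)) := by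
      funext t; exact br_eq x y t
    rw [this]
    exact Real.continuous_sqrt.comp h1
  have hpow_int : ∀ (e : ℝ), -1 < e → ∀ a' b' : ℝ,
      IntervalIntegrable (fun t => (1-t)^e) volume a' b' := by
    intro e he a' b'
    have h := (intervalIntegral.intervalIntegrable_rpow' (a := 1 - b') (b := 1 - a')
      he).comp_sub_left 1
    simpa using h.symm
  set g : ℝ → ℝ := fun t => (1-t)^b / B t ^ q with hgdef
  have hBqcont : ContinuousOn (fun t => (B t ^ q)⁻¹) (Set.Icc (0:ℝ) 1) := by
    apply ContinuousOn.inv₀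
    · exact hBcont.continuousOn.rpow_const (fun t ht => Or.inl (hBpos t ht).ne')
    · exact fun t ht => (Real.rpow_pos_of_pos (hBpos t ht) q).ne'
  have hg_int : ∀ a' b' : ℝ, a' ∈ Set.Icc (0:ℝ) 1 → b' ∈ Set.Icc (0:ℝ) 1 →
      IntervalIntegrable g volume a' b' := by
    intro a' b' ha' hb'
    have hsub : Set.uIcc a' b' ⊆ Set.Icc (0:ℝ) 1 := by
      rw [show Set.Icc (0:ℝ) 1 = Set.uIcc 0 1 from (Set.uIcc_of_le zero_le_one).symm]
      exact Set.uIcc_subset_uIcc (by rwa [Set.uIcc_of_le zero_le_one])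
        (by rwa [Set.uIcc_of_le zero_le_one])
    have h := (hpow_int b hb a' b').mul_continuousOn (hBqcont.mono hsub)
    simpa [hgdef, div_eq_mul_inv] using h
  set t0 : ℝ := 1 - r/4 with ht0def
  have ht00 : 0 ≤ t0 := by rw [ht0def]; linarith
  have ht01 : t0 ≤ 1 := by rw [ht0def]; linarith
  have ht0m : t0 ∈ Set.Icc (0:ℝ) 1 := ⟨ht00, ht01⟩
  have h0m : (0:ℝ) ∈ Set.Icc (0:ℝ) 1 := by constructor <;> norm_num
  have h1m : (1:ℝ) ∈ Set.Icc (0:ℝ) 1 := by constructor <;> norm_num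
  have hsplit : (∫ t in (0:ℝ)..1, g t) = (∫ t in (0:ℝ)..t0, g t) + ∫ t in t0..(1:ℝ), g t :=
    (intervalIntegral.integral_add_adjacent_intervals (hg_int 0 t0 h0m ht0m)
      (hg_int t0 1 ht0m h1m)).symm
  -- pointwise bound for q > 0
  have hpoint : 0 < q → ∀ t ∈ Set.Ico (0:ℝ) 1, g t ≤ (1-t)^(b - q) := by
    intro hqpos t ht
    have h1tpos : 0 < 1 - t := by linarith [ht.2]
    have hBt : 1 - t ≤ B t := hBlb1 t ht.1 ht.2.le
    rw [Real.rpow_sub h1tpos]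
    exact div_le_div_of_nonneg_left (Real.rpow_nonneg h1tpos.le b)
      (Real.rpow_pos_of_pos h1tpos q) (Real.rpow_le_rpow h1tpos.le hBt hqpos.le)
  -- part A bound (q > 0)
  have partA : 0 < q → (∫ t in (0:ℝ)..t0, g t) ≤ ∫ u in (r/4:ℝ)..1, u ^ (b - q) := by
    intro hqpos
    have hmaj_cont : ContinuousOn (fun t : ℝ => (1-t)^(b-q)) (Set.Icc 0 t0) := by
      apply ContinuousOn.rpow_const (by fun_prop)
      intro t ht
      left
      have h1 : t ≤ t0 := ht.2
      have : 0 < 1 - t := by rw [ht0def] at h1; linarith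
      linarith
    have hmaj_int : IntervalIntegrable (fun t : ℝ => (1-t)^(b-q)) volume 0 t0 := by
      exact ContinuousOn.intervalIntegrable_of_Icc ht00 hmaj_cont
    have hmono := integral_mono_Ico ht00 (hg_int 0 t0 h0m ht0m) hmaj_int
      (fun t ht => hpoint hqpos t ⟨ht.1, lt_of_lt_of_le ht.2 ht01⟩)
    have hcomp : (∫ t in (0:ℝ)..t0, (1-t)^(b-q)) = ∫ u in (r/4:ℝ)..1, u ^ (b-q) := by
      have h := intervalIntegral.integral_comp_sub_left (a := 0) (b := t0)
        (fun u : ℝ => u ^ (b-q)) 1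
      simpa [ht0def] using h
    rw [hcomp] at hmono
    exact hmono
  -- part B bound (0 ≤ q)
  have hIB : (∫ t in t0..(1:ℝ), (1-t)^b) = (r/4)^(b+1) / (b+1) := by
    have h := intervalIntegral.integral_comp_sub_left (a := t0) (b := 1)
      (fun u : ℝ => u ^ b) 1
    have h2 : (∫ t in t0..(1:ℝ), (1-t)^b) = ∫ u in (0:ℝ)..(r/4), u ^ b := by
      simpa [ht0def] using h
    rw [h2, integral_rpow (Or.inl hb), Real.zero_rpow hb1', sub_zero]
  have partB : 0 ≤ q → (∫ t in t0..(1:ℝ), g t) ≤ ((r/4)^(b+1) / (b+1)) / (r/4) ^ q := by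
    intro hq0
    have hmaj_int : IntervalIntegrable (fun t : ℝ => (1-t)^b / (r/4)^q) volume t0 1 :=
      (hpow_int b hb t0 1).div_const _
    have hmono := integral_mono_Ico ht01 (hg_int t0 1 ht0m h1m) hmaj_int ?_
    · rw [intervalIntegral.integral_div, hIB] at hmono
      exact hmono
    · intro t ht
      have hBt : r/4 ≤ B t := hBlb2 t (le_trans ht00 ht.1) ht.2.le
      have h1t : 0 ≤ 1 - t := by linarith [ht.2]
      exact div_le_div_of_nonneg_left (Real.rpow_nonneg h1t b)
        (Real.rpow_pos_of_pos hr40 q) (Real.rpow_le_rpow hr40.le hBt hq0)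
  have hnm : (0:ℝ) ∉ Set.uIcc (r/4) 1 := by
    rw [Set.uIcc_of_le (by linarith : r/4 ≤ (1:ℝ))]
    intro h
    exact absurd h.1 (by linarith)
  refine ⟨?_, ?_, ?_⟩
  · -- case c > 0
    intro hc
    have hqpos : 0 < q := by rw [hqdef]; linarith
    have hinvc : (0:ℝ) < 1/c := by positivity
    have hne1 : b - q ≠ -1 := by
      rw [hqdef]
      intro h
      apply hc.ne'
      linarith
    have E1 : (∫ u in (r/4:ℝ)..1, u ^ (b - q)) = ((r/4)^(-c) - 1)/c := by
      rw [integral_rpow (Or.inr ⟨hne1, hnm⟩),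
        show b - q + 1 = -c from by rw [hqdef]; ring, Real.one_rpow]
      rw [div_neg, ← neg_div, neg_sub]
    have e2 : ((r/4)^(b+1)/(b+1))/(r/4)^q = (r/4)^(-c) / (b+1) := by
      rw [div_right_comm, ← Real.rpow_sub hr40,
        show b + 1 - q = -c from by rw [hqdef]; ring]
    have e3 : ((r:ℝ)/4)^(-c) = 4^c / r^c := by
      rw [Real.rpow_neg (by positivity), Real.div_rpow hr0.le (by norm_num : (0:ℝ) ≤ 4),
        inv_div]
    have hX0 : (0:ℝ) ≤ (r/4)^(-c) := Real.rpow_nonneg hr40.le _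
    have hrc : (0:ℝ) < r ^ c := Real.rpow_pos_of_pos hr0 c
    have h43 : (4:ℝ) ^ c * (1/c + 1/(b+1)) = 4 ^ |c| * (1 / |c| + 1/(b+1)) := by rw [abs_of_pos hc]
    have hstep : (∫ t in (0:ℝ)..1, g t) ≤ (r/4)^(-c)*(1/c+1/(b+1)) := by
      rw [hsplit]
      have h1 := (partA hqpos).trans_eq E1
      have h2 := (partB hqpos.le).trans_eq e2
      have : ((r/4)^(-c) - 1)/c + (r/4)^(-c)/(b+1)
          = (r/4)^(-c)*(1/c+1/(b+1)) - 1/c := by ring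
      linarith
    show (∫ t in (0:ℝ)..1, g t) ≤ _ / r ^ c
    calc (∫ t in (0:ℝ)..1, g t) ≤ (r/4)^(-c)*(1/c+1/(b+1)) := hstep
    _ = (4^c*(1/c+1/(b+1))) / r^c := by rw [e3]; ring
    _ ≤ _ / r^c := by
        apply div_le_div_of_nonneg_right ?_ hrc.le
        rw [h43]
        linarith
  · -- case c = 0
    intro hc
    subst hc
    have hqpos : 0 < q := by rw [hqdef]; linarith
    have E1 : (∫ u in (r/4:ℝ)..1, u ^ (b - q)) = Real.log 4 - Real.log r := by
      rw [show b - q = -1 from by rw [hqdef]; ring]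
      simp only [Real.rpow_neg_one]
      rw [integral_inv hnm, one_div, Real.log_inv,
        Real.log_div hr0.ne' (by norm_num : (4:ℝ) ≠ 0)]
      ring
    have e2 : ((r/4)^(b+1)/(b+1))/(r/4)^q = 1 / (b+1) := by
      rw [div_right_comm, ← Real.rpow_sub hr40,
        show b + 1 - q = 0 from by rw [hqdef]; ring, Real.rpow_zero]
    have hL : Real.log r ≤ Real.log 2 := (Real.log_le_log_iff hr0 two_pos).2 hr2
    have hC0L : Real.log 4 - Real.log r + 1/(b+1) ≤ C0 * (1 - Real.log r) := by
      nlinarith [mul_nonneg (sub_nonneg.2 hC01) (sub_nonneg.2 hL), hC0eq, hlog2pos]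
    have hstep : (∫ t in (0:ℝ)..1, g t) ≤ Real.log 4 - Real.log r + 1/(b+1) := by
      rw [hsplit]
      have h1 := (partA hqpos).trans_eq E1
      have h2 := (partB hqpos.le).trans_eq e2
      linarith
    have hlog1r : Real.log (1/r) = -Real.log r := by rw [one_div, Real.log_inv]
    show (∫ t in (0:ℝ)..1, g t) ≤ _ * (1 + Real.log (1/r))
    rw [hlog1r]
    have hCC0 : C0 ≤ 1 + 2 ^ (1 + |b| + |(0:ℝ)|) / (b+1) + 1/|(0:ℝ)|
        + 4^|(0:ℝ)| * (1/|(0:ℝ)| + 1/(b+1)) + C0 := by linarith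
    have h1L : (0:ℝ) ≤ 1 - Real.log r := by linarith
    nlinarith [mul_le_mul_of_nonneg_right hCC0 h1L, hC0L]
  · -- case c < 0
    intro hc
    show (∫ t in (0:ℝ)..1, g t) ≤ _
    have hI01 : (∫ t in (0:ℝ)..1, (1-t)^b) = 1/(b+1) := by
      have h := intervalIntegral.integral_comp_sub_left (a := (0:ℝ)) (b := 1)
        (fun u : ℝ => u ^ b) 1
      have h2 : (∫ t in (0:ℝ)..1, (1-t)^b) = ∫ u in (0:ℝ)..1, u ^ b := by simpa using h
      rw [h2, integral_rpow (Or.inl hb), Real.one_rpow, Real.zero_rpow hb1', sub_zero]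
    rcases le_or_gt q 0 with hq0 | hq0
    · -- q ≤ 0
      have hpw : ∀ t ∈ Set.Ico (0:ℝ) 1, g t ≤ (1-t)^b * 2^(-q) := by
        intro t ht
        have hx' : ‖t • x‖ ≤ 1 := by
          rw [norm_smul, Real.norm_eq_abs]
          have h1 : |t| ≤ 1 := abs_le.2 ⟨by linarith [ht.1], ht.2.le⟩
          nlinarith [norm_nonneg x, hx.le]
        have hBub : B t ≤ 2 := br_le_two (t • x) y hx' hy.le
        have h2B : (2:ℝ)^q ≤ B t ^ q :=
          Real.rpow_le_rpow_of_nonpos (hBpos t ⟨ht.1, ht.2.le⟩) hBub hq0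
        have h1t : (0:ℝ) ≤ 1 - t := by linarith [ht.2]
        calc g t ≤ (1-t)^b / 2^q := div_le_div_of_nonneg_left (Real.rpow_nonneg h1t b)
              (Real.rpow_pos_of_pos two_pos q) h2B
        _ = (1-t)^b * 2^(-q) := by
            rw [Real.rpow_neg (by norm_num : (0:ℝ) ≤ 2), div_eq_mul_inv]
      have hmono := integral_mono_Ico zero_le_one (hg_int 0 1 h0m h1m)
        ((hpow_int b hb 0 1).mul_const _) hpw
      rw [intervalIntegral.integral_mul_const, hI01] at hmono
      have h2q : (2:ℝ)^(-q) ≤ 2^(1+|b|+|c|) :=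
        Real.rpow_le_rpow_of_exponent_le one_le_two
          (by rw [hqdef]; linarith [neg_abs_le b, neg_abs_le c])
      have hfin : 1/(b+1) * 2^(-q) ≤ 2^(1+|b|+|c|)/(b+1) := by
        rw [show (1:ℝ)/(b+1) * 2^(-q) = 2^(-q)/(b+1) from by ring]
        exact div_le_div_of_nonneg_right h2q hb1.le
      linarith [hmono, hfin, hC01]
    · -- q > 0
      have hbq : -1 < b - q := by rw [hqdef]; linarith
      have hmono := integral_mono_Ico zero_le_one (hg_int 0 1 h0m h1m)
        (hpow_int (b - q) hbq 0 1) (hpoint hq0)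
      have e : (∫ t in (0:ℝ)..1, (1-t)^(b-q)) = 1/(-c) := by
        have h := intervalIntegral.integral_comp_sub_left (a := (0:ℝ)) (b := 1)
          (fun u : ℝ => u ^ (b-q)) 1
        have h2 : (∫ t in (0:ℝ)..1, (1-t)^(b-q)) = ∫ u in (0:ℝ)..1, u ^ (b-q) := by
          simpa using h
        rw [h2, integral_rpow (Or.inl hbq), Real.one_rpow,
          show b - q + 1 = -c from by rw [hqdef]; ring,
          Real.zero_rpow (by linarith : -c ≠ 0), sub_zero]
      rw [e] at hmono
      have : 1/(-c) = 1/|c| := by rw [abs_of_neg hc]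
      rw [this] at hmono
      linarith [hmono, hC01]
end
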